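/- Let q be a power of a prime p, F̄ an algebraic closure of F_p, n ≥ 4 and 3 ≤ k ≤ n. Let H ⊆ GL_n(F̄) be the subgroup of block-diagonal matrices h = diag(a₁, a₂, A, a_k, a_{k+1}, …, a_n) with a₁, a₂, a_k, …, a_n ∈ F̄ˣ and A ∈ GL_{k−3}(F̄) (blocks of sizes 1, 1, k−3, 1, …, 1 along the diagonal), and let P ∈ GL_n(F̄) be the permutation matrix of the cycle (n n−1 ⋯ k+1 k) (sending n↦n−1↦⋯↦k↦n). Then the group Π = {h ∈ H : h = (P h P⁻¹)^{(q)}} is isomorphic to F_qˣ × F_qˣ × GL_{k−3}(F_q) × F_{q^{n−k+1}}ˣ. -/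

import Mathlib

open Matrix

/-- An algebraic closure of `F_p`. -/
abbrev Fbar (p : ℕ) [Fact p.Prime] : Type := AlgebraicClosure (ZMod p)

/-- The block index of a position `i ∈ Fin n` for the block structure
`(1, 1, k−3, 1, …, 1)`: positions `0` and `1` (0-indexed) are singleton
blocks, positions `2, …, k−2` form the block of size `k−3`, and each
position `≥ k−1` is a singleton block. -/
def blockIndex (n k : ℕ) (i : Fin n) : ℕ :=
  if (i : ℕ) ≤ 1 then (i : ℕ) else if (i : ℕ) ≤ k - 2 then 2 else (i : ℕ)

open Polynomial

/-! ### The fixed subfields of powers of Frobenius -/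

def fixedSubfield (p : ℕ) [Fact p.Prime] (s : ℕ) : Subfield (Fbar p) where
  carrier := {x | x ^ p ^ s = x}
  mul_mem' := by intro a b ha hb; simp only [Set.mem_setOf_eq] at *; rw [mul_pow, ha, hb]
  one_mem' := one_pow _
  add_mem' := by
    intro a b ha hb; simp only [Set.mem_setOf_eq] at *
    rw [add_pow_char_pow, ha, hb]
  zero_mem' := zero_pow (pow_ne_zero s (Fact.out : p.Prime).ne_zero)
  neg_mem' := by
    intro a ha; simp only [Set.mem_setOf_eq] at *
    have := sub_pow_char_pow (R := Fbar p) (p := p) (x := 0) (y := a) (n := s)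
    simpa [zero_sub, zero_pow (pow_ne_zero s (Fact.out : p.Prime).ne_zero), ha] using this
  inv_mem' := by
    intro a ha; simp only [Set.mem_setOf_eq] at *
    rw [inv_pow, ha]

theorem mem_fixedSubfield {p : ℕ} [Fact p.Prime] {s : ℕ} {x : Fbar p} :
    x ∈ fixedSubfield p s ↔ x ^ p ^ s = x := Iff.rfl

theorem card_fixedSubfield (p : ℕ) [Fact p.Prime] (s : ℕ) (hs : 1 ≤ s) :
    Nat.card (fixedSubfield p s) = p ^ s := by
  classical
  have hp := (Fact.out : p.Prime)
  have hsep : (X ^ p ^ s - X : (ZMod p)[X]).Separable :=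
    galois_poly_separable p (p ^ s) (dvd_pow_self p (by omega))
  have hsplit : Splits ((X ^ p ^ s - X : (ZMod p)[X]).map (algebraMap (ZMod p) (Fbar p))) :=
    IsAlgClosed.splits _
  have hdeg : (X ^ p ^ s - X : (ZMod p)[X]).natDegree = p ^ s :=
    FiniteField.X_pow_card_pow_sub_X_natDegree_eq (ZMod p) (by omega) hp.one_lt
  have h1 : 1 < p ^ s := Nat.one_lt_pow (by omega) hp.one_lt
  have hcard : Fintype.card ((X ^ p ^ s - X : (ZMod p)[X]).rootSet (Fbar p)) = p ^ s := by
    rw [card_rootSet_eq_natDegree hsep hsplit, hdeg]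
  have e : ↥(fixedSubfield p s) ≃ ((X ^ p ^ s - X : (ZMod p)[X]).rootSet (Fbar p)) := by
    apply Equiv.subtypeEquivRight
    intro x
    rw [mem_rootSet]
    constructor
    · intro hx
      refine ⟨?_, ?_⟩
      · intro h0
        rw [h0, natDegree_zero] at hdeg
        omega
      · simp only [map_sub, map_pow, aeval_X]
        rw [mem_fixedSubfield] at hx
        rw [hx, sub_self]
    · intro ⟨_, hx⟩
      simp only [map_sub, map_pow, aeval_X] at hx
      rw [mem_fixedSubfield]
      rwa [sub_eq_zero] at hx
  rw [Nat.card_congr e, Nat.card_eq_fintype_card, hcard]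

noncomputable def fixedSubfieldEquiv (p : ℕ) [Fact p.Prime] (s : ℕ) (hs : 1 ≤ s) :
    (fixedSubfield p s) ≃+* GaloisField p s := by
  have : CharP (fixedSubfield p s) p :=
    CharP.subring (Fbar p) p (fixedSubfield p s).toSubring
  letI : Algebra (ZMod p) (fixedSubfield p s) := ZMod.algebra _ p
  exact (GaloisField.algEquivGaloisField p s (card_fixedSubfield p s hs)).toRingEquiv

/-! ### The block matrices -/

def Mmat {F : Type*} [CommRing F] (Q n k : ℕ) (a b : F)
    (A : Matrix (Fin (k-3)) (Fin (k-3)) F) (d : F) :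
    Matrix (Fin n) (Fin n) F := fun i j =>
  if (i:ℕ) = 0 ∧ (j:ℕ) = 0 then a
  else if (i:ℕ) = 1 ∧ (j:ℕ) = 1 then b
  else if h : 2 ≤ (i:ℕ) ∧ (i:ℕ) ≤ k-2 ∧ 2 ≤ (j:ℕ) ∧ (j:ℕ) ≤ k-2 then
    A ⟨(i:ℕ)-2, by omega⟩ ⟨(j:ℕ)-2, by omega⟩
  else if (i:ℕ) = (j:ℕ) ∧ k - 1 ≤ (i:ℕ) then d ^ Q ^ ((n - (i:ℕ)) % (n - k + 1))
  else 0

section MmatLemmas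
variable {F : Type*} [CommRing F]
variable {Q n k : ℕ} {a b d : F} {A : Matrix (Fin (k-3)) (Fin (k-3)) F} {i j : Fin n}

theorem Mmat_eq_zero (h1 : ¬((i:ℕ) = 0 ∧ (j:ℕ) = 0)) (h2 : ¬((i:ℕ) = 1 ∧ (j:ℕ) = 1))
    (h3 : ¬(2 ≤ (i:ℕ) ∧ (i:ℕ) ≤ k-2 ∧ 2 ≤ (j:ℕ) ∧ (j:ℕ) ≤ k-2))
    (h4 : ¬((i:ℕ) = (j:ℕ) ∧ k - 1 ≤ (i:ℕ))) :
    Mmat Q n k a b A d i j = 0 := by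
  simp only [Mmat]
  rw [if_neg h1, if_neg h2, dif_neg h3, if_neg h4]

theorem Mmat_apply_00 (hi : (i:ℕ) = 0) (hj : (j:ℕ) = 0) :
    Mmat Q n k a b A d i j = a := by
  simp only [Mmat]; rw [if_pos ⟨hi, hj⟩]

theorem Mmat_apply_11 (hi : (i:ℕ) = 1) (hj : (j:ℕ) = 1) :
    Mmat Q n k a b A d i j = b := by
  simp only [Mmat]; rw [if_neg (by omega), if_pos ⟨hi, hj⟩]

theorem Mmat_apply_mid (h2i : 2 ≤ (i:ℕ)) (hik : (i:ℕ) ≤ k-2)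
    (h2j : 2 ≤ (j:ℕ)) (hjk : (j:ℕ) ≤ k-2) :
    Mmat Q n k a b A d i j = A ⟨(i:ℕ)-2, by omega⟩ ⟨(j:ℕ)-2, by omega⟩ := by
  simp only [Mmat]
  rw [if_neg (by omega), if_neg (by omega), dif_pos ⟨h2i, hik, h2j, hjk⟩]

theorem Mmat_apply_high (hk3 : 3 ≤ k) (hij : (i:ℕ) = (j:ℕ)) (hik : k-1 ≤ (i:ℕ)) :
    Mmat Q n k a b A d i j = d ^ Q ^ ((n - (i:ℕ)) % (n - k + 1)) := by
  simp only [Mmat]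
  rw [if_neg (by omega), if_neg (by omega), dif_neg (by omega), if_pos ⟨hij, hik⟩]

theorem Mmat_blockIndex (h : blockIndex n k i ≠ blockIndex n k j) :
    Mmat Q n k a b A d i j = 0 := by
  apply Mmat_eq_zero <;>
  · simp only [blockIndex] at h
    split_ifs at h <;> exact fun hc => h (by omega)

end MmatLemmas

def midEmb (n k : ℕ) (hkn : k ≤ n) : Fin (k-3) ↪ Fin n :=
  ⟨fun u => ⟨(u:ℕ)+2, by have := u.isLt; omega⟩,
   fun u v h => by
    apply Fin.ext
    have : (u:ℕ)+2 = (v:ℕ)+2 := congrArg Fin.val h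
    omega⟩

theorem midEmb_val {n k : ℕ} (hkn : k ≤ n) (u : Fin (k-3)) :
    ((midEmb n k hkn u : Fin n) : ℕ) = (u:ℕ) + 2 := rfl

theorem mem_midEmb_range {n k : ℕ} (hkn : k ≤ n) (hk3 : 3 ≤ k) (l : Fin n) :
    l ∈ Finset.univ.map (midEmb n k hkn) ↔ 2 ≤ (l:ℕ) ∧ (l:ℕ) ≤ k - 2 := by
  rw [Finset.mem_map]
  constructor
  · rintro ⟨u, -, rfl⟩
    have := u.isLt
    rw [midEmb_val]
    omega
  · intro hl
    exact ⟨⟨(l:ℕ)-2, by omega⟩, Finset.mem_univ _, Fin.ext (by show (l:ℕ)-2+2 = (l:ℕ); omega)⟩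

theorem Mmat_mul {F : Type*} [CommRing F] {Q n k : ℕ} (hk3 : 3 ≤ k) (hkn : k ≤ n)
    (a b d a' b' d' : F) (A A' : Matrix (Fin (k-3)) (Fin (k-3)) F) :
    Mmat Q n k a b A d * Mmat Q n k a' b' A' d'
      = Mmat Q n k (a*a') (b*b') (A*A') (d*d') := by
  ext i j
  rw [Matrix.mul_apply]
  by_cases hi0 : (i:ℕ) = 0
  · rw [Finset.sum_eq_single i]
    · rw [Mmat_apply_00 hi0 hi0]
      by_cases hj0 : (j:ℕ) = 0
      · rw [Mmat_apply_00 hi0 hj0, Mmat_apply_00 hi0 hj0]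
      · rw [Mmat_eq_zero (by omega) (by omega) (by omega) (by omega),
          Mmat_eq_zero (by omega) (by omega) (by omega) (by omega), mul_zero]
    · intro l _ hl
      have hl' : (l:ℕ) ≠ (i:ℕ) := fun h => hl (Fin.ext h)
      exact mul_eq_zero_of_left
        (Mmat_eq_zero (by omega) (by omega) (by omega) (by omega)) _
    · intro h; exact absurd (Finset.mem_univ i) h
  · by_cases hi1 : (i:ℕ) = 1
    · rw [Finset.sum_eq_single i]
      · rw [Mmat_apply_11 hi1 hi1]
        by_cases hj1 : (j:ℕ) = 1
        · rw [Mmat_apply_11 hi1 hj1, Mmat_apply_11 hi1 hj1]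
        · rw [Mmat_eq_zero (by omega) (by omega) (by omega) (by omega),
            Mmat_eq_zero (by omega) (by omega) (by omega) (by omega), mul_zero]
      · intro l _ hl
        have hl' : (l:ℕ) ≠ (i:ℕ) := fun h => hl (Fin.ext h)
        exact mul_eq_zero_of_left
          (Mmat_eq_zero (by omega) (by omega) (by omega) (by omega)) _
      · intro h; exact absurd (Finset.mem_univ i) h
    · by_cases him : (i:ℕ) ≤ k - 2
      · have hi2 : 2 ≤ (i:ℕ) := by omega
        have hk4 : 4 ≤ k := by omega
        have hzero : ∀ l : Fin n, l ∈ Finset.univ →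
            l ∉ Finset.univ.map (midEmb n k hkn) →
            Mmat Q n k a b A d i l * Mmat Q n k a' b' A' d' l j = 0 := by
          intro l _ hl
          rw [mem_midEmb_range hkn hk3] at hl
          exact mul_eq_zero_of_left
            (Mmat_eq_zero (by omega) (by omega) (by omega) (by omega)) _
        rw [← Finset.sum_subset (Finset.subset_univ (Finset.univ.map (midEmb n k hkn))) hzero,
          Finset.sum_map]
        by_cases hjm : 2 ≤ (j:ℕ) ∧ (j:ℕ) ≤ k-2
        · have hmain : ∀ u : Fin (k-3),
              Mmat Q n k a b A d i (midEmb n k hkn u)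
                * Mmat Q n k a' b' A' d' (midEmb n k hkn u) j
              = A ⟨(i:ℕ)-2, by omega⟩ u * A' u ⟨(j:ℕ)-2, by omega⟩ := by
            intro u
            have hu := u.isLt
            rw [Mmat_apply_mid hi2 him (by rw [midEmb_val]; omega) (by rw [midEmb_val]; omega),
              Mmat_apply_mid (i := midEmb n k hkn u) (by rw [midEmb_val]; omega)
                (by rw [midEmb_val]; omega) hjm.1 hjm.2]
            congr 2 <;> exact Fin.ext (by rw [midEmb_val])
          rw [Finset.sum_congr rfl (fun u _ => hmain u), ← Matrix.mul_apply,
            Mmat_apply_mid hi2 him hjm.1 hjm.2]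
        · have hmain : ∀ u : Fin (k-3),
              Mmat Q n k a b A d i (midEmb n k hkn u)
                * Mmat Q n k a' b' A' d' (midEmb n k hkn u) j = 0 := by
            intro u
            have hu := u.isLt
            have huv := midEmb_val hkn u
            exact mul_eq_zero_of_right _
              (Mmat_eq_zero (by omega) (by omega) (by omega) (by omega))
          rw [Finset.sum_congr rfl (fun u _ => hmain u), Finset.sum_const_zero,
            Mmat_eq_zero (by omega) (by omega) (by omega) (by omega)]
      · have hik : k - 1 ≤ (i:ℕ) := by omega
        rw [Finset.sum_eq_single i]
        · rw [Mmat_apply_high hk3 rfl hik]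
          by_cases hij : (i:ℕ) = (j:ℕ)
          · rw [Mmat_apply_high hk3 hij hik, Mmat_apply_high hk3 hij hik, mul_pow]
          · rw [Mmat_eq_zero (by omega) (by omega) (by omega) (by omega),
              Mmat_eq_zero (by omega) (by omega) (by omega) (by omega), mul_zero]
        · intro l _ hl
          have hl' : (l:ℕ) ≠ (i:ℕ) := fun h => hl (Fin.ext h)
          exact mul_eq_zero_of_left
            (Mmat_eq_zero (by omega) (by omega) (by omega) (by omega)) _
        · intro h; exact absurd (Finset.mem_univ i) h

theorem Mmat_one {F : Type*} [CommRing F] {Q n k : ℕ} (hk3 : 3 ≤ k) (hkn : k ≤ n) :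
    (Mmat Q n k (1:F) 1 1 1) = 1 := by
  ext i j
  by_cases hij : i = j
  · subst hij
    rw [Matrix.one_apply_eq]
    by_cases hi0 : (i:ℕ) = 0
    · rw [Mmat_apply_00 hi0 hi0]
    · by_cases hi1 : (i:ℕ) = 1
      · rw [Mmat_apply_11 hi1 hi1]
      · by_cases him : (i:ℕ) ≤ k - 2
        · rw [Mmat_apply_mid (by omega) him (by omega) him, Matrix.one_apply_eq]
        · rw [Mmat_apply_high hk3 rfl (by omega), one_pow]
  · have hij' : (i:ℕ) ≠ (j:ℕ) := fun h => hij (Fin.ext h)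
    rw [Matrix.one_apply_ne hij]
    by_cases hm : 2 ≤ (i:ℕ) ∧ (i:ℕ) ≤ k-2 ∧ 2 ≤ (j:ℕ) ∧ (j:ℕ) ≤ k-2
    · rw [Mmat_apply_mid hm.1 hm.2.1 hm.2.2.1 hm.2.2.2]
      refine Matrix.one_apply_ne (fun h => hij' ?_)
      have := congrArg Fin.val h
      simp only [] at this
      omega
    · exact Mmat_eq_zero (by omega) (by omega) (by omega) (by omega)

/-! ### Permutation conjugation and the Frobenius condition -/

section Perm
variable {F : Type*} [CommRing F] {n : ℕ} (c : Equiv.Perm (Fin n))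
  (P : Matrix (Fin n) (Fin n) F) (hP : ∀ i j : Fin n, P i j = if i = c j then 1 else 0)

include hP

theorem perm_mul_transpose : P * Pᵀ = 1 := by
  ext i j
  rw [Matrix.mul_apply]
  rw [Finset.sum_eq_single (c⁻¹ i)]
  · rw [Matrix.transpose_apply, hP, hP, Equiv.Perm.coe_inv, Equiv.apply_symm_apply]
    simp [Matrix.one_apply, eq_comm]
  · intro l _ hl
    apply mul_eq_zero_of_left
    rw [hP, if_neg]
    intro h
    exact hl (by rw [h]; simp)
  · intro h; exact absurd (Finset.mem_univ _) h

theorem perm_conj_apply (M : Matrix (Fin n) (Fin n) F) (i j : Fin n) :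
    (P * M * Pᵀ) i j = M (c⁻¹ i) (c⁻¹ j) := by
  have h1 : ∀ x : Fin n, (P * M) i x = M (c⁻¹ i) x := by
    intro x
    rw [Matrix.mul_apply, Finset.sum_eq_single (c⁻¹ i)]
    · rw [hP, Equiv.Perm.coe_inv, Equiv.apply_symm_apply, if_pos rfl, one_mul]
    · intro l _ hl
      apply mul_eq_zero_of_left
      rw [hP, if_neg]
      intro h
      exact hl (by rw [h]; simp)
    · intro h; exact absurd (Finset.mem_univ _) h
  rw [Matrix.mul_apply, Finset.sum_eq_single (c⁻¹ j)]
  · rw [h1, Matrix.transpose_apply, hP, Equiv.Perm.coe_inv, Equiv.apply_symm_apply, if_pos rfl, mul_one]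
  · intro l _ hl
    apply mul_eq_zero_of_right
    rw [Matrix.transpose_apply, hP, if_neg]
    intro h
    exact hl (by rw [h]; simp)
  · intro h; exact absurd (Finset.mem_univ _) h

theorem frob_cond_iff {Q : ℕ} (M : Matrix (Fin n) (Fin n) F) :
    (M = (P * M * P⁻¹).map fun x => x ^ Q) ↔
      ∀ i j : Fin n, M (c i) (c j) = (M i j) ^ Q := by
  have hPinv : P⁻¹ = Pᵀ := Matrix.inv_eq_right_inv (perm_mul_transpose c P hP)
  rw [hPinv]
  constructor
  · intro h i j
    conv_lhs => rw [h]
    rw [Matrix.map_apply, perm_conj_apply c P hP, Equiv.Perm.coe_inv, Equiv.symm_apply_apply,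
      Equiv.symm_apply_apply]
  · intro h
    ext i j
    rw [Matrix.map_apply, perm_conj_apply c P hP, ← h,
      Equiv.Perm.coe_inv, Equiv.apply_symm_apply, Equiv.apply_symm_apply]

end Perm

theorem pow_pow_mod {F : Type*} [CommRing F] (d : F) (Q r : ℕ)
    (hd : d ^ Q ^ r = d) (s : ℕ) : d ^ Q ^ s = d ^ Q ^ (s % r) := by
  have aux : ∀ t e : ℕ, d ^ Q ^ (r * t + e) = d ^ Q ^ e := by
    intro t
    induction t with
    | zero => intro e; rw [Nat.mul_zero, Nat.zero_add]
    | succ t ih =>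
      intro e
      have h1 : r * (t+1) + e = r + (r * t + e) := by ring
      rw [h1, pow_add, pow_mul, hd, ih]
  conv_lhs => rw [← Nat.div_add_mod s r]
  exact aux (s / r) (s % r)

theorem Mmat_frob {F : Type*} [CommRing F] {Q n k : ℕ} (hQ : 1 ≤ Q)
    (hk3 : 3 ≤ k) (hkn : k ≤ n)
    (c : Equiv.Perm (Fin n))
    (hc : ∀ i : Fin n, (c i : ℕ) =
      if (i : ℕ) < k - 1 then (i : ℕ)
      else if (i : ℕ) = k - 1 then n - 1 else (i : ℕ) - 1)
    {a b d : F} {A : Matrix (Fin (k-3)) (Fin (k-3)) F}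
    (ha : a ^ Q = a) (hb : b ^ Q = b) (hA : ∀ u v, A u v ^ Q = A u v)
    (hd : d ^ Q ^ (n - k + 1) = d) (i j : Fin n) :
    Mmat Q n k a b A d (c i) (c j) = (Mmat Q n k a b A d i j) ^ Q := by
  have hQQ : Q ≠ 0 := by omega
  have hci := hc i
  have hcj := hc j
  have hin := i.isLt
  have hjn := j.isLt
  by_cases hilow : (i:ℕ) < k - 1
  · have hciv : ((c i : Fin n) : ℕ) = (i:ℕ) := by rw [hci, if_pos hilow]
    by_cases hjlow : (j:ℕ) < k - 1
    · have hcjv : ((c j : Fin n) : ℕ) = (j:ℕ) := by rw [hcj, if_pos hjlow]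
      by_cases h00 : (i:ℕ) = 0 ∧ (j:ℕ) = 0
      · rw [Mmat_apply_00 (hciv.trans h00.1) (hcjv.trans h00.2),
          Mmat_apply_00 h00.1 h00.2, ha]
      · by_cases h11 : (i:ℕ) = 1 ∧ (j:ℕ) = 1
        · rw [Mmat_apply_11 (hciv.trans h11.1) (hcjv.trans h11.2),
            Mmat_apply_11 h11.1 h11.2, hb]
        · by_cases hmm : 2 ≤ (i:ℕ) ∧ (i:ℕ) ≤ k-2 ∧ 2 ≤ (j:ℕ) ∧ (j:ℕ) ≤ k-2
          · rw [Mmat_apply_mid (by omega) (by omega) (by omega) (by omega),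
              Mmat_apply_mid hmm.1 hmm.2.1 hmm.2.2.1 hmm.2.2.2]
            simp only [hciv, hcjv]
            exact (hA _ _).symm
          · rw [Mmat_eq_zero (by omega) (by omega) (by omega) (by omega),
              Mmat_eq_zero (by omega) (by omega) (by omega) (by omega),
              zero_pow hQQ]
    · have hcjge : k - 1 ≤ ((c j : Fin n) : ℕ) := by rw [hcj]; split_ifs <;> omega
      rw [Mmat_eq_zero (by omega) (by omega) (by omega) (by omega),
        Mmat_eq_zero (by omega) (by omega) (by omega) (by omega), zero_pow hQQ]
  · have hcige : k - 1 ≤ ((c i : Fin n) : ℕ) := by rw [hci]; split_ifs <;> omega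
    by_cases hjlow : (j:ℕ) < k - 1
    · have hcjv : ((c j : Fin n) : ℕ) = (j:ℕ) := by rw [hcj, if_pos hjlow]
      rw [Mmat_eq_zero (by omega) (by omega) (by omega) (by omega),
        Mmat_eq_zero (by omega) (by omega) (by omega) (by omega), zero_pow hQQ]
    · by_cases hij : (i:ℕ) = (j:ℕ)
      · have : i = j := Fin.ext hij
        subst this
        by_cases hik1 : (i:ℕ) = k - 1
        · have hciv : ((c i : Fin n) : ℕ) = n - 1 := by
            rw [hci, if_neg (by omega), if_pos hik1]
          rw [Mmat_apply_high hk3 rfl hcige, Mmat_apply_high hk3 rfl (by omega)]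
          simp only [hciv]
          have e1 : n - (n - 1) = 1 := by omega
          have e2 : n - (i:ℕ) = n - k + 1 := by omega
          rw [e1, e2, Nat.mod_self, pow_zero, pow_one,
            ← pow_pow_mod d Q (n-k+1) hd 1, pow_one]
        · have hciv : ((c i : Fin n) : ℕ) = (i:ℕ) - 1 := by
            rw [hci, if_neg (by omega), if_neg hik1]
          rw [Mmat_apply_high hk3 rfl hcige, Mmat_apply_high hk3 rfl (by omega)]
          simp only [hciv]
          have e1 : n - ((i:ℕ) - 1) = (n - (i:ℕ)) + 1 := by omega
          rw [e1, ← pow_pow_mod d Q (n-k+1) hd ((n - (i:ℕ)) + 1),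
            ← pow_pow_mod d Q (n-k+1) hd (n - (i:ℕ)), ← pow_mul, ← pow_succ]
      · have hcij : ((c i : Fin n) : ℕ) ≠ ((c j : Fin n) : ℕ) := by
          rw [hci, hcj]; split_ifs <;> omega
        rw [Mmat_eq_zero (by omega) (by omega) (by omega) (by omega),
          Mmat_eq_zero (by omega) (by omega) (by omega) (by omega), zero_pow hQQ]

/-! ### The group `zipGroup` and the homomorphism `Phi` -/

abbrev zipGroup (p m n k : ℕ) [Fact p.Prime] : Type :=
  (fixedSubfield p m)ˣ × (fixedSubfield p m)ˣ ×
    (Matrix (Fin (k-3)) (Fin (k-3)) (fixedSubfield p m))ˣ ×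
    (fixedSubfield p (m * (n - k + 1)))ˣ

noncomputable def PhiMat (p m n k : ℕ) [Fact p.Prime] (g : zipGroup p m n k) :
    Matrix (Fin n) (Fin n) (Fbar p) :=
  Mmat (p^m) n k
    ((g.1 : fixedSubfield p m) : Fbar p)
    ((g.2.1 : fixedSubfield p m) : Fbar p)
    ((g.2.2.1 : Matrix (Fin (k-3)) (Fin (k-3)) (fixedSubfield p m)).map
      (fixedSubfield p m).subtype)
    ((g.2.2.2 : fixedSubfield p (m * (n - k + 1))) : Fbar p)

theorem PhiMat_mul {p m n k : ℕ} [Fact p.Prime] (hk3 : 3 ≤ k) (hkn : k ≤ n)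
    (g g' : zipGroup p m n k) :
    PhiMat p m n k g * PhiMat p m n k g' = PhiMat p m n k (g * g') := by
  unfold PhiMat
  rw [Mmat_mul hk3 hkn, ← Matrix.map_mul]
  rfl

theorem PhiMat_one {p m n k : ℕ} [Fact p.Prime] (hk3 : 3 ≤ k) (hkn : k ≤ n) :
    PhiMat p m n k 1 = 1 := by
  unfold PhiMat
  have h1 : (((1 : zipGroup p m n k).2.2.1 :
      Matrix (Fin (k-3)) (Fin (k-3)) (fixedSubfield p m)).map
      (fixedSubfield p m).subtype) = 1 := by
    show ((1 : Matrix (Fin (k-3)) (Fin (k-3)) (fixedSubfield p m)).map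
      (fixedSubfield p m).subtype) = 1
    exact Matrix.map_one _ (map_zero _) (map_one _)
  rw [h1]
  exact Mmat_one hk3 hkn

noncomputable def Phi (p m n k : ℕ) [Fact p.Prime] (hk3 : 3 ≤ k) (hkn : k ≤ n) :
    zipGroup p m n k →* (Matrix (Fin n) (Fin n) (Fbar p))ˣ :=
  MonoidHom.mk' (fun g =>
    { val := PhiMat p m n k g
      inv := PhiMat p m n k g⁻¹
      val_inv := by rw [PhiMat_mul hk3 hkn, mul_inv_cancel]; exact PhiMat_one hk3 hkn
      inv_val := by rw [PhiMat_mul hk3 hkn, inv_mul_cancel]; exact PhiMat_one hk3 hkn })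
    (fun g g' => Units.ext ((PhiMat_mul hk3 hkn g g').symm))

theorem Phi_val {p m n k : ℕ} [Fact p.Prime] (hk3 : 3 ≤ k) (hkn : k ≤ n)
    (g : zipGroup p m n k) :
    ((Phi p m n k hk3 hkn g : (Matrix (Fin n) (Fin n) (Fbar p))ˣ) :
      Matrix (Fin n) (Fin n) (Fbar p)) = PhiMat p m n k g := rfl

set_option maxHeartbeats 1000000 in
theorem Phi_injective {p m n k : ℕ} [Fact p.Prime] (hk3 : 3 ≤ k) (hkn : k ≤ n)
    (hn : 4 ≤ n) :
    Function.Injective (Phi p m n k hk3 hkn) := by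
  intro g g' hgg
  have hval : PhiMat p m n k g = PhiMat p m n k g' := congrArg Units.val hgg
  unfold PhiMat at hval
  obtain ⟨g1, g2, g3, g4⟩ := g
  obtain ⟨g1', g2', g3', g4'⟩ := g'
  simp only at hval
  have e1 : g1 = g1' := by
    have h0 := congrFun (congrFun hval ⟨0, by omega⟩) ⟨0, by omega⟩
    rw [Mmat_apply_00 rfl rfl, Mmat_apply_00 rfl rfl] at h0
    exact Units.ext (Subtype.ext h0)
  have e2 : g2 = g2' := by
    have h0 := congrFun (congrFun hval ⟨1, by omega⟩) ⟨1, by omega⟩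
    rw [Mmat_apply_11 rfl rfl, Mmat_apply_11 rfl rfl] at h0
    exact Units.ext (Subtype.ext h0)
  have e3 : g3 = g3' := by
    apply Units.ext
    ext u v
    have hu := u.isLt
    have hv := v.isLt
    have h0 := congrFun (congrFun hval ⟨(u:ℕ)+2, by omega⟩) ⟨(v:ℕ)+2, by omega⟩
    rw [Mmat_apply_mid (by show 2 ≤ (u:ℕ)+2; omega) (by show (u:ℕ)+2 ≤ k-2; omega)
        (by show 2 ≤ (v:ℕ)+2; omega) (by show (v:ℕ)+2 ≤ k-2; omega),
      Mmat_apply_mid (by show 2 ≤ (u:ℕ)+2; omega) (by show (u:ℕ)+2 ≤ k-2; omega)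
        (by show 2 ≤ (v:ℕ)+2; omega) (by show (v:ℕ)+2 ≤ k-2; omega)] at h0
    have hue : ∀ hb, (⟨(u:ℕ)+2-2, hb⟩ : Fin (k-3)) = u :=
      fun hb => Fin.ext (by show (u:ℕ)+2-2 = (u:ℕ); omega)
    have hve : ∀ hb, (⟨(v:ℕ)+2-2, hb⟩ : Fin (k-3)) = v :=
      fun hb => Fin.ext (by show (v:ℕ)+2-2 = (v:ℕ); omega)
    rw [hue, hve] at h0
    exact h0
  have e4 : g4 = g4' := by
    have h0 := congrFun (congrFun hval ⟨k-1, by omega⟩) ⟨k-1, by omega⟩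
    rw [Mmat_apply_high hk3 rfl (le_refl _), Mmat_apply_high hk3 rfl (le_refl _)] at h0
    have he : (n - (k-1)) % (n - k + 1) = 0 := by
      rw [show n - (k-1) = n - k + 1 by omega, Nat.mod_self]
    rw [he, pow_zero, pow_one, pow_one] at h0
    exact Units.ext (Subtype.ext h0)
  simp only [Prod.mk.injEq]
  exact ⟨e1, e2, e3, e4⟩

set_option maxHeartbeats 1000000 in
set_option synthInstance.maxHeartbeats 200000 in
theorem exists_phiMat {p m n k : ℕ} [Fact p.Prime] (hk3 : 3 ≤ k) (hkn : k ≤ n)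
    (hn : 4 ≤ n)
    (c : Equiv.Perm (Fin n))
    (hc : ∀ i : Fin n, (c i : ℕ) =
      if (i : ℕ) < k - 1 then (i : ℕ)
      else if (i : ℕ) = k - 1 then n - 1 else (i : ℕ) - 1)
    (P : Matrix (Fin n) (Fin n) (Fbar p))
    (hP : ∀ i j : Fin n, P i j = if i = c j then 1 else 0)
    (xv xi : Matrix (Fin n) (Fin n) (Fbar p))
    (hvi : xv * xi = 1) (hiv : xi * xv = 1)
    (hblock : ∀ i j : Fin n, blockIndex n k i ≠ blockIndex n k j → xv i j = 0)
    (hfrob : xv = (P * xv * P⁻¹).map fun y => y ^ p ^ m) :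
    ∃ g : zipGroup p m n k, PhiMat p m n k g = xv := by
  have hp : p.Prime := Fact.out
  have hQ1 : 1 ≤ p ^ m := Nat.one_le_pow _ _ hp.pos
  have hQne : p ^ m ≠ 0 := by omega
  have hfrob' : ∀ i j : Fin n, xv (c i) (c j) = (xv i j) ^ p ^ m :=
    (frob_cond_iff c P hP xv).mp hfrob
  have hcfix : ∀ i : Fin n, (i:ℕ) < k-1 → c i = i :=
    fun i hi => Fin.ext (by rw [hc i, if_pos hi])
  -- the inverse matrix is also Frobenius-stable
  have hPP : P * Pᵀ = 1 := perm_mul_transpose c P hP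
  have hPPT : Pᵀ * P = 1 := mul_eq_one_comm.mp hPP
  have hPinv : P⁻¹ = Pᵀ := Matrix.inv_eq_right_inv hPP
  have hφ : (fun y : Fbar p => y ^ p ^ m) = ⇑(iterateFrobenius (Fbar p) p m) := rfl
  have hmapmul : ∀ X Y : Matrix (Fin n) (Fin n) (Fbar p),
      (X*Y).map (fun y => y ^ p^m)
        = X.map (fun y => y ^ p^m) * Y.map (fun y => y ^ p^m) := by
    intro X Y; rw [hφ]; exact Matrix.map_mul
  have hmapone : (1 : Matrix (Fin n) (Fin n) (Fbar p)).map (fun y => y^p^m) = 1 :=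
    Matrix.map_one _ (zero_pow hQne) (one_pow _)
  have hconj : ∀ X Y : Matrix (Fin n) (Fin n) (Fbar p),
      (P*X*Pᵀ) * (P*Y*Pᵀ) = P*(X*Y)*Pᵀ := by
    intro X Y
    simp only [Matrix.mul_assoc]
    rw [← Matrix.mul_assoc Pᵀ P (Y * Pᵀ), hPPT, Matrix.one_mul]
  have hNinv : xv * ((P * xi * P⁻¹).map (fun y => y^p^m)) = 1 := by
    conv_lhs => rw [hfrob]
    rw [hPinv, ← hmapmul, hconj, hvi, Matrix.mul_one, hPP, hmapone]
  have hxinv : xi = (P * xi * P⁻¹).map (fun y => y^p^m) := by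
    calc xi = xi * (xv * ((P * xi * P⁻¹).map (fun y => y^p^m))) := by
          rw [hNinv, Matrix.mul_one]
      _ = (xi * xv) * ((P * xi * P⁻¹).map (fun y => y^p^m)) :=
          (Matrix.mul_assoc xi xv _).symm
      _ = (P * xi * P⁻¹).map (fun y => y^p^m) := by rw [hiv, Matrix.one_mul]
  have hfrobinv' : ∀ i j : Fin n, xi (c i) (c j) = (xi i j) ^ p ^ m :=
    (frob_cond_iff c P hP xi).mp hxinv
  -- diagonal entries multiply to 1 on singleton blocks
  have hdiag : ∀ i : Fin n, ¬(2 ≤ (i:ℕ) ∧ (i:ℕ) ≤ k-2) → xv i i * xi i i = 1 := by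
    intro i hi
    have h0 := congrFun (congrFun hvi i) i
    have h1 : (∑ l : Fin n, xv i l * xi l i) = xv i i * xi i i := by
      apply Finset.sum_eq_single
      · intro l _ hl
        have hl' : (l:ℕ) ≠ (i:ℕ) := fun hh => hl (Fin.ext hh)
        apply mul_eq_zero_of_left
        apply hblock
        simp only [blockIndex]; split_ifs <;> omega
      · intro hmem; exact absurd (Finset.mem_univ _) hmem
    rw [Matrix.mul_apply, h1, Matrix.one_apply_eq] at h0
    exact h0
  -- the scalar entries
  have ha_mem : xv ⟨0, by omega⟩ ⟨0, by omega⟩ ∈ fixedSubfield p m := by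
    have h0 := hfrob' ⟨0, by omega⟩ ⟨0, by omega⟩
    rw [hcfix _ (by show (0:ℕ) < k-1; omega)] at h0
    exact h0.symm
  have ha_ne : xv ⟨0, by omega⟩ ⟨0, by omega⟩ ≠ 0 :=
    left_ne_zero_of_mul_eq_one
      (hdiag ⟨0, by omega⟩ (by show ¬(2 ≤ (0:ℕ) ∧ (0:ℕ) ≤ k-2); omega))
  have hb_mem : xv ⟨1, by omega⟩ ⟨1, by omega⟩ ∈ fixedSubfield p m := by
    have h0 := hfrob' ⟨1, by omega⟩ ⟨1, by omega⟩
    rw [hcfix _ (by show (1:ℕ) < k-1; omega)] at h0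
    exact h0.symm
  have hb_ne : xv ⟨1, by omega⟩ ⟨1, by omega⟩ ≠ 0 :=
    left_ne_zero_of_mul_eq_one
      (hdiag ⟨1, by omega⟩ (by show ¬(2 ≤ (1:ℕ) ∧ (1:ℕ) ≤ k-2); omega))
  -- the lower-right diagonal entries
  have hd_claim : ∀ s : ℕ, s ≤ n - k →
      xv ⟨n-1-s, by omega⟩ ⟨n-1-s, by omega⟩
        = (xv ⟨k-1, by omega⟩ ⟨k-1, by omega⟩) ^ (p^m) ^ (s+1) := by
    intro s
    induction s with
    | zero =>
      intro _
      have h0 := hfrob' ⟨k-1, by omega⟩ ⟨k-1, by omega⟩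
      have hcik : c ⟨k-1, by omega⟩ = ⟨n-1-0, by omega⟩ := by
        apply Fin.ext
        rw [hc]
        show (if k-1 < k - 1 then k-1 else if k-1 = k - 1 then n - 1 else k-1 - 1) = n-1-0
        rw [if_neg (lt_irrefl _), if_pos rfl]
        omega
      rw [hcik] at h0
      rw [h0, Nat.zero_add, pow_one]
    | succ s ih =>
      intro hs
      have h0 := hfrob' ⟨n-1-s, by omega⟩ ⟨n-1-s, by omega⟩
      have hcis : c ⟨n-1-s, by omega⟩ = ⟨n-1-(s+1), by omega⟩ := by
        apply Fin.ext
        rw [hc]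
        show (if n-1-s < k - 1 then n-1-s else if n-1-s = k - 1 then n - 1 else n-1-s - 1)
          = n-1-(s+1)
        rw [if_neg (by omega), if_neg (by omega)]
        omega
      rw [hcis, ih (by omega)] at h0
      rw [h0, ← pow_mul, ← pow_succ]
  have hd_eq : (xv ⟨k-1, by omega⟩ ⟨k-1, by omega⟩) ^ (p^m) ^ (n-k+1)
      = xv ⟨k-1, by omega⟩ ⟨k-1, by omega⟩ := by
    have h0 := hd_claim (n-k) (le_refl _)
    have he : (⟨n-1-(n-k), by omega⟩ : Fin n) = ⟨k-1, by omega⟩ :=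
      Fin.ext (by show n-1-(n-k) = k-1; omega)
    rw [he] at h0
    exact h0.symm
  have hd_mem : xv ⟨k-1, by omega⟩ ⟨k-1, by omega⟩ ∈ fixedSubfield p (m*(n-k+1)) := by
    show _ ^ p ^ (m*(n-k+1)) = _
    rw [pow_mul]
    exact hd_eq
  have hd_ne : xv ⟨k-1, by omega⟩ ⟨k-1, by omega⟩ ≠ 0 :=
    left_ne_zero_of_mul_eq_one
      (hdiag ⟨k-1, by omega⟩ (by show ¬(2 ≤ k-1 ∧ k-1 ≤ k-2); omega))
  have hhigh : ∀ i : Fin n, k-1 ≤ (i:ℕ) →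
      xv i i = (xv ⟨k-1, by omega⟩ ⟨k-1, by omega⟩) ^ (p^m) ^ ((n - (i:ℕ)) % (n-k+1)) := by
    intro i hi
    have hin := i.isLt
    have h0 := hd_claim (n-1-(i:ℕ)) (by omega)
    have he : (⟨n-1-(n-1-(i:ℕ)), by omega⟩ : Fin n) = i :=
      Fin.ext (by show n-1-(n-1-(i:ℕ)) = (i:ℕ); omega)
    rw [he] at h0
    have hs : n-1-(i:ℕ)+1 = n - (i:ℕ) := by omega
    rw [hs] at h0
    rw [h0, pow_pow_mod _ _ _ hd_eq (n - (i:ℕ))]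
  -- the middle block
  have hmidmem : ∀ u v : Fin (k-3),
      xv (midEmb n k hkn u) (midEmb n k hkn v) ∈ fixedSubfield p m := by
    intro u v
    have hu := u.isLt
    have hv := v.isLt
    have h0 := hfrob' (midEmb n k hkn u) (midEmb n k hkn v)
    rw [hcfix _ (by rw [midEmb_val]; omega), hcfix _ (by rw [midEmb_val]; omega)] at h0
    exact h0.symm
  have himem : ∀ u v : Fin (k-3),
      xi (midEmb n k hkn u) (midEmb n k hkn v) ∈ fixedSubfield p m := by
    intro u v
    have hu := u.isLt
    have hv := v.isLt
    have h0 := hfrobinv' (midEmb n k hkn u) (midEmb n k hkn v)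
    rw [hcfix _ (by rw [midEmb_val]; omega), hcfix _ (by rw [midEmb_val]; omega)] at h0
    exact h0.symm
  let A : Matrix (Fin (k-3)) (Fin (k-3)) (fixedSubfield p m) :=
    fun u v => ⟨xv (midEmb n k hkn u) (midEmb n k hkn v), hmidmem u v⟩
  let B : Matrix (Fin (k-3)) (Fin (k-3)) (fixedSubfield p m) :=
    fun u v => ⟨xi (midEmb n k hkn u) (midEmb n k hkn v), himem u v⟩
  have hABval : ∀ u v : Fin (k-3),
      (∑ w : Fin (k-3), xv (midEmb n k hkn u) (midEmb n k hkn w) *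
        xi (midEmb n k hkn w) (midEmb n k hkn v))
      = if u = v then 1 else 0 := by
    intro u v
    have hu := u.isLt
    have hv := v.isLt
    have huval := midEmb_val hkn u
    have h0 := congrFun (congrFun hvi (midEmb n k hkn u)) (midEmb n k hkn v)
    have hvan : ∀ l ∈ Finset.univ, l ∉ Finset.univ.map (midEmb n k hkn) →
        xv (midEmb n k hkn u) l * xi l (midEmb n k hkn v) = 0 := by
      intro l _ hl
      rw [mem_midEmb_range hkn hk3] at hl
      apply mul_eq_zero_of_left
      apply hblock
      simp only [blockIndex]
      split_ifs <;> omega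
    rw [Matrix.mul_apply,
      ← Finset.sum_subset (Finset.subset_univ (Finset.univ.map (midEmb n k hkn))) hvan,
      Finset.sum_map] at h0
    rw [h0, Matrix.one_apply]
    by_cases huv : u = v
    · rw [if_pos (by rw [huv]), if_pos huv]
    · rw [if_neg (fun hh => huv ((midEmb n k hkn).injective hh)), if_neg huv]
  have hBAval : ∀ u v : Fin (k-3),
      (∑ w : Fin (k-3), xi (midEmb n k hkn u) (midEmb n k hkn w) *
        xv (midEmb n k hkn w) (midEmb n k hkn v))
      = if u = v then 1 else 0 := by
    intro u v
    have hu := u.isLt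
    have hv := v.isLt
    have hvval := midEmb_val hkn v
    have h0 := congrFun (congrFun hiv (midEmb n k hkn u)) (midEmb n k hkn v)
    have hvan : ∀ l ∈ Finset.univ, l ∉ Finset.univ.map (midEmb n k hkn) →
        xi (midEmb n k hkn u) l * xv l (midEmb n k hkn v) = 0 := by
      intro l _ hl
      rw [mem_midEmb_range hkn hk3] at hl
      apply mul_eq_zero_of_right
      apply hblock
      simp only [blockIndex]
      split_ifs <;> omega
    rw [Matrix.mul_apply,
      ← Finset.sum_subset (Finset.subset_univ (Finset.univ.map (midEmb n k hkn))) hvan,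
      Finset.sum_map] at h0
    rw [h0, Matrix.one_apply]
    by_cases huv : u = v
    · rw [if_pos (by rw [huv]), if_pos huv]
    · rw [if_neg (fun hh => huv ((midEmb n k hkn).injective hh)), if_neg huv]
  have hAB : A * B = 1 := by
    ext u v
    have hL : (fixedSubfield p m).subtype ((A * B) u v)
        = ∑ w : Fin (k-3), xv (midEmb n k hkn u) (midEmb n k hkn w) *
            xi (midEmb n k hkn w) (midEmb n k hkn v) := by
      rw [Matrix.mul_apply, map_sum]
      rfl
    have hR : (fixedSubfield p m).subtype ((1 : Matrix (Fin (k-3)) (Fin (k-3))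
        (fixedSubfield p m)) u v) = if u = v then 1 else 0 := by
      rw [Matrix.one_apply]
      split_ifs <;> simp
    exact hL.trans ((hABval u v).trans hR.symm)
  have hBA : B * A = 1 := by
    ext u v
    have hL : (fixedSubfield p m).subtype ((B * A) u v)
        = ∑ w : Fin (k-3), xi (midEmb n k hkn u) (midEmb n k hkn w) *
            xv (midEmb n k hkn w) (midEmb n k hkn v) := by
      rw [Matrix.mul_apply, map_sum]
      rfl
    have hR : (fixedSubfield p m).subtype ((1 : Matrix (Fin (k-3)) (Fin (k-3))
        (fixedSubfield p m)) u v) = if u = v then 1 else 0 := by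
      rw [Matrix.one_apply]
      split_ifs <;> simp
    exact hL.trans ((hBAval u v).trans hR.symm)
  -- assemble the element of `zipGroup`
  refine ⟨(Units.mk0 (⟨_, ha_mem⟩ : fixedSubfield p m)
      (fun hz => ha_ne (congrArg Subtype.val hz)),
    Units.mk0 (⟨_, hb_mem⟩ : fixedSubfield p m)
      (fun hz => hb_ne (congrArg Subtype.val hz)),
    ⟨A, B, hAB, hBA⟩,
    Units.mk0 (⟨_, hd_mem⟩ : fixedSubfield p (m*(n-k+1)))
      (fun hz => hd_ne (congrArg Subtype.val hz))), ?_⟩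
  unfold PhiMat
  ext i j
  by_cases h00 : (i:ℕ) = 0 ∧ (j:ℕ) = 0
  · rw [Mmat_apply_00 h00.1 h00.2]
    show xv ⟨0, by omega⟩ ⟨0, by omega⟩ = xv i j
    rw [show i = (⟨0, by omega⟩ : Fin n) from Fin.ext (by show (i:ℕ) = 0; omega),
      show j = (⟨0, by omega⟩ : Fin n) from Fin.ext (by show (j:ℕ) = 0; omega)]
  · by_cases h11 : (i:ℕ) = 1 ∧ (j:ℕ) = 1
    · rw [Mmat_apply_11 h11.1 h11.2]
      show xv ⟨1, by omega⟩ ⟨1, by omega⟩ = xv i j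
      rw [show i = (⟨1, by omega⟩ : Fin n) from Fin.ext (by show (i:ℕ) = 1; omega),
        show j = (⟨1, by omega⟩ : Fin n) from Fin.ext (by show (j:ℕ) = 1; omega)]
    · by_cases hmid : 2 ≤ (i:ℕ) ∧ (i:ℕ) ≤ k-2 ∧ 2 ≤ (j:ℕ) ∧ (j:ℕ) ≤ k-2
      · rw [Mmat_apply_mid hmid.1 hmid.2.1 hmid.2.2.1 hmid.2.2.2]
        show xv (midEmb n k hkn ⟨(i:ℕ)-2, by omega⟩) (midEmb n k hkn ⟨(j:ℕ)-2, by omega⟩)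
          = xv i j
        rw [show midEmb n k hkn ⟨(i:ℕ)-2, by omega⟩ = i from
            Fin.ext (by show (i:ℕ)-2+2 = (i:ℕ); omega),
          show midEmb n k hkn ⟨(j:ℕ)-2, by omega⟩ = j from
            Fin.ext (by show (j:ℕ)-2+2 = (j:ℕ); omega)]
      · by_cases hhi : (i:ℕ) = (j:ℕ) ∧ k-1 ≤ (i:ℕ)
        · obtain ⟨hij, hik⟩ := hhi
          have hij' : i = j := Fin.ext hij
          subst hij'
          rw [Mmat_apply_high hk3 rfl hik]
          show (xv ⟨k-1, by omega⟩ ⟨k-1, by omega⟩) ^ (p^m) ^ ((n - (i:ℕ)) % (n-k+1))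
            = xv i i
          exact (hhigh i hik).symm
        · rw [Mmat_eq_zero h00 h11 hmid hhi]
          refine (hblock i j ?_).symm
          simp only [blockIndex]
          split_ifs <;> omega


set_option maxHeartbeats 1000000 in
/-- Let `q = p^m` be a prime power, `F̄` an algebraic
closure of `F_p`, `n ≥ 4` and `3 ≤ k ≤ n`.  Let `H ⊆ GL_n(F̄)` be the
subgroup of block-diagonal matrices for the block structure
`(1, 1, k−3, 1, …, 1)` and let `P` be the permutation matrix of the cycle
`(n n−1 ⋯ k+1 k)` (sending `n ↦ n−1 ↦ ⋯ ↦ k ↦ n`).  Then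
`Π = {h ∈ H : h = (P h P⁻¹)^{(q)}}` is a group isomorphic to
`F_qˣ × F_qˣ × GL_{k−3}(F_q) × F_{q^{n−k+1}}ˣ`. -/
theorem gln_one_nminusone_zip_stabilizer_iso
    (p m q : ℕ) [Fact p.Prime] (hm : 1 ≤ m) (hq : q = p ^ m)
    (n k : ℕ) (hn : 4 ≤ n) (hk3 : 3 ≤ k) (hkn : k ≤ n)
    (c : Equiv.Perm (Fin n))
    (hc : ∀ i : Fin n, (c i : ℕ) =
      if (i : ℕ) < k - 1 then (i : ℕ)
      else if (i : ℕ) = k - 1 then n - 1 else (i : ℕ) - 1)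
    (P : Matrix (Fin n) (Fin n) (Fbar p))
    (hP : ∀ i j : Fin n, P i j = if i = c j then 1 else 0) :
    ∃ Pi : Subgroup (Matrix (Fin n) (Fin n) (Fbar p))ˣ,
      (Pi : Set (Matrix (Fin n) (Fin n) (Fbar p))ˣ) =
        {h : (Matrix (Fin n) (Fin n) (Fbar p))ˣ |
          (∀ i j : Fin n, blockIndex n k i ≠ blockIndex n k j →
            (h : Matrix (Fin n) (Fin n) (Fbar p)) i j = 0) ∧
          (h : Matrix (Fin n) (Fin n) (Fbar p)) =
            ((P * (h : Matrix (Fin n) (Fin n) (Fbar p)) * P⁻¹).map fun x => x ^ q)} ∧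
      Nonempty (Pi ≃*
        ((GaloisField p m)ˣ × (GaloisField p m)ˣ ×
          (Matrix (Fin (k - 3)) (Fin (k - 3)) (GaloisField p m))ˣ ×
          (GaloisField p (m * (n - k + 1)))ˣ)) := by
    classical
  subst hq
  have hp : p.Prime := Fact.out
  have hQ1 : 1 ≤ p ^ m := Nat.one_le_pow _ _ hp.pos
  refine ⟨(Phi p m n k hk3 hkn).range, ?_, ?_⟩
  · ext x
    simp only [SetLike.mem_coe, MonoidHom.mem_range, Set.mem_setOf_eq]
    constructor
    · rintro ⟨g, rfl⟩
      rw [Phi_val]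
      constructor
      · intro i j hbi
        exact Mmat_blockIndex hbi
      · refine (frob_cond_iff c P hP _).mpr ?_
        intro i j
        refine Mmat_frob hQ1 hk3 hkn c hc ?_ ?_ ?_ ?_ i j
        · exact (g.1 : fixedSubfield p m).2
        · exact (g.2.1 : fixedSubfield p m).2
        · intro u v
          exact ((g.2.2.1 : Matrix (Fin (k-3)) (Fin (k-3)) (fixedSubfield p m)) u v).2
        · have hmem := (g.2.2.2 : fixedSubfield p (m*(n-k+1))).2
          rw [mem_fixedSubfield, pow_mul] at hmem
          exact hmem
    · rintro ⟨hblock, hfrob⟩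
      obtain ⟨g, hg⟩ := exists_phiMat hk3 hkn hn c hc P hP
        (x : Matrix (Fin n) (Fin n) (Fbar p)) ((x⁻¹ : _ˣ) : Matrix (Fin n) (Fin n) (Fbar p))
        x.mul_inv x.inv_mul hblock hfrob
      exact ⟨g, Units.ext (by rw [Phi_val]; exact hg)⟩
  · constructor
    have e1 : (fixedSubfield p m) ≃+* GaloisField p m := fixedSubfieldEquiv p m hm
    have eR : (fixedSubfield p (m*(n-k+1))) ≃+* GaloisField p (m*(n-k+1)) :=
      fixedSubfieldEquiv p (m*(n-k+1)) (by
        have h1 : n - k + 1 ≠ 0 := by omega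
        have := Nat.mul_ne_zero (by omega : m ≠ 0) h1
        omega)
    exact (MonoidHom.ofInjective (Phi_injective hk3 hkn hn)).symm.trans
      ((Units.mapEquiv e1.toMulEquiv).prodCongr
        ((Units.mapEquiv e1.toMulEquiv).prodCongr
          ((Units.mapEquiv e1.mapMatrix.toMulEquiv).prodCongr
            (Units.mapEquiv eR.toMulEquiv))))
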